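/- Let A be an n×n real matrix, X₀ a symmetric positive semidefinite n×n matrix, α ≥ 0, and (W_k)_{k≥0} symmetric positive semidefinite n×n matrices with λ_max(W_j) ≤ W_max for all j ≥ 0. Define X_{k+1} := A X_k Aᵀ + α² W_k for k ≥ 0. Then for every k ≥ 0, λ_max(X_k) ≤ α² W_max · Σ_{i=0}^{k−1} ‖A^i‖₂² + λ_max(X₀) · ‖A^k‖₂². -/

import Mathlib

open Matrix

/-- The largest eigenvalue of a symmetric real matrix `M`, expressed as the supremum of
the quadratic form `vᵀ M v` over unit Euclidean vectors `v`. -/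
noncomputable def lamMax {n : ℕ} (M : Matrix (Fin n) (Fin n) ℝ) : ℝ :=
  sSup {x : ℝ | ∃ v : Fin n → ℝ, (∑ i, v i ^ 2 = 1) ∧ x = v ⬝ᵥ M.mulVec v}

/-- The spectral norm of a square real matrix (the operator norm induced by the
Euclidean vector norm). -/
noncomputable def specNorm {n : ℕ} (M : Matrix (Fin n) (Fin n) ℝ) : ℝ :=
  ‖Matrix.toEuclideanCLM (𝕜 := ℝ) M‖

lemma dot_eq_inner {n : ℕ} (M : Matrix (Fin n) (Fin n) ℝ) (v : Fin n → ℝ) :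
    v ⬝ᵥ M.mulVec v =
      inner ℝ ((WithLp.equiv 2 _).symm v : EuclideanSpace ℝ (Fin n))
        (Matrix.toEuclideanCLM (𝕜 := ℝ) M ((WithLp.equiv 2 _).symm v)) := by
  simp only [WithLp.equiv_symm_apply, toEuclideanCLM_toLp]
  simp [PiLp.inner_apply, RCLike.inner_apply, starRingEnd_apply, dotProduct, mulVec,
    Matrix.toLin'_apply]
  exact Finset.sum_congr rfl fun _ _ => mul_comm _ _

lemma sum_sq_eq_norm_sq {n : ℕ} (v : Fin n → ℝ) :
    ∑ i, v i ^ 2 = ‖((WithLp.equiv 2 _).symm v : EuclideanSpace ℝ (Fin n))‖ ^ 2 := by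
  rw [← real_inner_self_eq_norm_sq]
  simp only [WithLp.equiv_symm_apply, PiLp.inner_apply, PiLp.toLp_apply]
  simp [RCLike.inner_apply, starRingEnd_apply, sq]

lemma quad_le_specNorm {n : ℕ} (M : Matrix (Fin n) (Fin n) ℝ) (v : Fin n → ℝ) :
    v ⬝ᵥ M.mulVec v ≤ specNorm M * ∑ i, v i ^ 2 := by
  set ve : EuclideanSpace ℝ (Fin n) := (WithLp.equiv 2 _).symm v with hve
  set T := Matrix.toEuclideanCLM (𝕜 := ℝ) M with hT
  calc v ⬝ᵥ M.mulVec v = inner ℝ ve (T ve) := dot_eq_inner M v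
    _ ≤ ‖ve‖ * ‖T ve‖ := real_inner_le_norm _ _
    _ ≤ ‖ve‖ * (‖T‖ * ‖ve‖) := by
        exact mul_le_mul_of_nonneg_left (T.le_opNorm ve) (norm_nonneg _)
    _ = ‖T‖ * ‖ve‖ ^ 2 := by ring
    _ = specNorm M * ∑ i, v i ^ 2 := by rw [sum_sq_eq_norm_sq]; rfl

lemma sum_sq_mulVec_le {n : ℕ} (M : Matrix (Fin n) (Fin n) ℝ) (v : Fin n → ℝ) :
    ∑ i, (M.mulVec v) i ^ 2 ≤ specNorm M ^ 2 * ∑ i, v i ^ 2 := by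
  set ve : EuclideanSpace ℝ (Fin n) := (WithLp.equiv 2 _).symm v with hve
  set T := Matrix.toEuclideanCLM (𝕜 := ℝ) M with hT
  have h1 : (WithLp.equiv 2 _).symm (M.mulVec v) = T ve := by
    simp only [hT, hve, WithLp.equiv_symm_apply, toEuclideanCLM_toLp]
  have := sum_sq_eq_norm_sq (M.mulVec v)
  rw [h1] at this
  rw [this, sum_sq_eq_norm_sq v]
  calc ‖T ve‖ ^ 2 ≤ (‖T‖ * ‖ve‖) ^ 2 := by
        apply pow_le_pow_left₀ (norm_nonneg _) (T.le_opNorm ve)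
    _ = specNorm M ^ 2 * ‖ve‖ ^ 2 := by rw [specNorm, ← hT]; ring

set_option synthInstance.maxHeartbeats 1000000 in
set_option maxHeartbeats 2000000 in
lemma specNorm_transpose {n : ℕ} (M : Matrix (Fin n) (Fin n) ℝ) :
    specNorm Mᵀ = specNorm M := by
  have h : Mᵀ = star M := rfl
  rw [specNorm, h, map_star, specNorm, ContinuousLinearMap.star_eq_adjoint]
  exact ContinuousLinearMap.adjoint.norm_map (Matrix.toEuclideanCLM (𝕜 := ℝ) M)

lemma lamMax_bddAbove {n : ℕ} (M : Matrix (Fin n) (Fin n) ℝ) :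
    BddAbove {x : ℝ | ∃ v : Fin n → ℝ, (∑ i, v i ^ 2 = 1) ∧ x = v ⬝ᵥ M.mulVec v} := by
  refine ⟨specNorm M, fun x hx => ?_⟩
  obtain ⟨v, hv, rfl⟩ := hx
  have := quad_le_specNorm M v
  rwa [hv, mul_one] at this

lemma quad_le_lamMax {n : ℕ} (M : Matrix (Fin n) (Fin n) ℝ) (w : Fin n → ℝ) :
    w ⬝ᵥ M.mulVec w ≤ lamMax M * ∑ i, w i ^ 2 := by
  rcases eq_or_ne (∑ i, w i ^ 2) 0 with h | h
  · have hw : w = 0 := by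
      funext i
      have h0 := (Finset.sum_eq_zero_iff_of_nonneg
        (fun i _ => sq_nonneg (w i))).mp h i (Finset.mem_univ i)
      exact pow_eq_zero_iff two_ne_zero |>.mp h0
    simp [hw, h]
  · have hpos : 0 < ∑ i, w i ^ 2 :=
      lt_of_le_of_ne (Finset.sum_nonneg fun i _ => sq_nonneg _) (Ne.symm h)
    set s := ∑ i, w i ^ 2 with hs
    set c := (Real.sqrt s)⁻¹ with hcdef
    have hc : c ^ 2 = s⁻¹ := by
      rw [hcdef, inv_pow, Real.sq_sqrt hpos.le]
    have hv : ∑ i, (c • w) i ^ 2 = 1 := by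
      simp only [Pi.smul_apply, smul_eq_mul, mul_pow, ← Finset.mul_sum, hc, ← hs]
      exact inv_mul_cancel₀ h
    have hmem : (c • w) ⬝ᵥ M.mulVec (c • w) ∈
        {x : ℝ | ∃ v : Fin n → ℝ, (∑ i, v i ^ 2 = 1) ∧ x = v ⬝ᵥ M.mulVec v} :=
      ⟨c • w, hv, rfl⟩
    have hle := le_csSup (lamMax_bddAbove M) hmem
    have key : (c • w) ⬝ᵥ M.mulVec (c • w) = c ^ 2 * (w ⬝ᵥ M.mulVec w) := by
      rw [mulVec_smul, dotProduct_smul, smul_dotProduct]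
      simp [smul_eq_mul]; ring
    rw [key, hc] at hle
    have := mul_le_mul_of_nonneg_left hle hpos.le
    rw [← mul_assoc, mul_inv_cancel₀ h, one_mul] at this
    rw [lamMax, mul_comm]
    exact this

lemma lamMax_nonneg {n : ℕ} {M : Matrix (Fin n) (Fin n) ℝ} (hM : M.PosSemidef) :
    0 ≤ lamMax M := by
  rcases Nat.eq_zero_or_pos n with h | h
  · subst h
    have hempty : {x : ℝ | ∃ v : Fin 0 → ℝ, (∑ i, v i ^ 2 = 1) ∧ x = v ⬝ᵥ M.mulVec v} = ∅ := by
      ext x; simp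
    rw [lamMax, hempty, Real.sSup_empty]
  · set v : Fin n → ℝ := Pi.single ⟨0, h⟩ 1 with hv
    have hsum : ∑ i, v i ^ 2 = 1 := by
      rw [hv]
      simp [Pi.single_apply]
    have hmem : v ⬝ᵥ M.mulVec v ∈
        {x : ℝ | ∃ u : Fin n → ℝ, (∑ i, u i ^ 2 = 1) ∧ x = u ⬝ᵥ M.mulVec u} := ⟨v, hsum, rfl⟩
    have h0 : 0 ≤ v ⬝ᵥ M.mulVec v := by
      have := hM.dotProduct_mulVec_nonneg v
      simpa using this
    exact h0.trans (le_csSup (lamMax_bddAbove M) hmem)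

lemma main_aux {n : ℕ} (A : Matrix (Fin n) (Fin n) ℝ)
    (X₀ : Matrix (Fin n) (Fin n) ℝ)
    (α : ℝ) (Wmax : ℝ) (hWmax : 0 ≤ Wmax)
    (W : ℕ → Matrix (Fin n) (Fin n) ℝ)
    (hW : ∀ j, lamMax (W j) ≤ Wmax)
    (X : ℕ → Matrix (Fin n) (Fin n) ℝ)
    (hX0 : X 0 = X₀)
    (hXrec : ∀ k, X (k + 1) = A * X k * Aᵀ + (α ^ 2) • W k) :
    ∀ k, ∀ v : Fin n → ℝ, v ⬝ᵥ (X k).mulVec v ≤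
      α ^ 2 * Wmax * (∑ i ∈ Finset.range k, ∑ j, ((Aᵀ ^ i).mulVec v) j ^ 2) +
        lamMax X₀ * ∑ j, ((Aᵀ ^ k).mulVec v) j ^ 2 := by
  intro k
  induction k with
  | zero =>
      intro v
      simp only [pow_zero, one_mulVec, Finset.range_zero, Finset.sum_empty, mul_zero, zero_add,
        hX0]
      exact quad_le_lamMax X₀ v
  | succ k IH =>
      intro v
      set u := Aᵀ.mulVec v with hu
      have hrw : v ⬝ᵥ (X (k + 1)).mulVec v
          = u ⬝ᵥ (X k).mulVec u + α ^ 2 * (v ⬝ᵥ (W k).mulVec v) := by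
        rw [hXrec k, add_mulVec, dotProduct_add, smul_mulVec, dotProduct_smul,
          smul_eq_mul]
        congr 1
        rw [hu, ← mulVec_mulVec, ← mulVec_mulVec, dotProduct_mulVec, ← mulVec_transpose]
      have hWk : v ⬝ᵥ (W k).mulVec v ≤ Wmax * ∑ j, v j ^ 2 := by
        refine (quad_le_lamMax (W k) v).trans ?_
        exact mul_le_mul_of_nonneg_right (hW k) (Finset.sum_nonneg fun j _ => sq_nonneg _)
      have hshift : ∀ i : ℕ, (Aᵀ ^ i).mulVec u = (Aᵀ ^ (i + 1)).mulVec v := by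
        intro i
        rw [hu, mulVec_mulVec, ← pow_succ]
      have hIH := IH u
      simp only [hshift] at hIH
      have hsum : ∑ i ∈ Finset.range (k + 1), ∑ j, ((Aᵀ ^ i).mulVec v) j ^ 2
          = (∑ i ∈ Finset.range k, ∑ j, ((Aᵀ ^ (i + 1)).mulVec v) j ^ 2)
            + ∑ j, ((Aᵀ ^ 0).mulVec v) j ^ 2 := Finset.sum_range_succ' _ k
      rw [hrw, hsum]
      simp only [pow_zero, one_mulVec]
      have hα2 : 0 ≤ α ^ 2 := sq_nonneg α
      nlinarith [mul_le_mul_of_nonneg_left hWk hα2, hIH]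

/-- For the recursion `X_{k+1} = A X_k Aᵀ + α² W_k` with `X₀` symmetric PSD,
`α ≥ 0` and symmetric PSD matrices `W_j` with `λ_max(W_j) ≤ W_max`, for every `k`:
`λ_max(X_k) ≤ α² W_max Σ_{i=0}^{k-1} ‖A^i‖₂² + λ_max(X₀) ‖A^k‖₂²`. -/
theorem lamMax_autocorrelation_recursion_bound
    (n : ℕ) (A : Matrix (Fin n) (Fin n) ℝ)
    (X₀ : Matrix (Fin n) (Fin n) ℝ) (hX₀ : X₀.PosSemidef)
    (α : ℝ) (hα : 0 ≤ α)
    (Wmax : ℝ) (hWmax : 0 ≤ Wmax)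
    (W : ℕ → Matrix (Fin n) (Fin n) ℝ)
    (hWpsd : ∀ j, (W j).PosSemidef)
    (hW : ∀ j, lamMax (W j) ≤ Wmax)
    (X : ℕ → Matrix (Fin n) (Fin n) ℝ)
    (hX0 : X 0 = X₀)
    (hXrec : ∀ k, X (k + 1) = A * X k * Aᵀ + (α ^ 2) • W k) :
    ∀ k, lamMax (X k) ≤
      α ^ 2 * Wmax * (∑ i ∈ Finset.range k, specNorm (A ^ i) ^ 2) +
        lamMax X₀ * specNorm (A ^ k) ^ 2 := by
  intro k
  have hX₀nonneg : 0 ≤ lamMax X₀ := lamMax_nonneg hX₀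
  have hspec : ∀ (i : ℕ) (v : Fin n → ℝ), (∑ j, v j ^ 2 = 1) →
      ∑ j, ((Aᵀ ^ i).mulVec v) j ^ 2 ≤ specNorm (A ^ i) ^ 2 := by
    intro i v hv
    have h1 := sum_sq_mulVec_le (Aᵀ ^ i) v
    have h2 : specNorm (Aᵀ ^ i) = specNorm (A ^ i) := by
      rw [← transpose_pow, specNorm_transpose]
    rw [hv, mul_one, h2] at h1
    exact h1
  have hRHSnonneg : 0 ≤ α ^ 2 * Wmax * (∑ i ∈ Finset.range k, specNorm (A ^ i) ^ 2) +
      lamMax X₀ * specNorm (A ^ k) ^ 2 := by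
    apply add_nonneg
    · exact mul_nonneg (mul_nonneg (sq_nonneg α) hWmax)
        (Finset.sum_nonneg fun i _ => sq_nonneg _)
    · exact mul_nonneg hX₀nonneg (sq_nonneg _)
  apply Real.sSup_le _ hRHSnonneg
  rintro x ⟨v, hv, rfl⟩
  have haux := main_aux A X₀ α Wmax hWmax W hW X hX0 hXrec k v
  refine haux.trans (add_le_add ?_ ?_)
  · apply mul_le_mul_of_nonneg_left _ (mul_nonneg (sq_nonneg α) hWmax)
    exact Finset.sum_le_sum fun i _ => hspec i v hv
  · exact mul_le_mul_of_nonneg_left (hspec k v hv) hX₀nonneg
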